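/- Let d ≥ 3 be odd and let C be a partial Latin hypercube of length k whose type is a magic set T ⊆ [k]^d of cardinality nk with n > 1. If C' is obtained from C by exchanging two distinct values i ≠ j ∈ [n] (i.e. swapping the preimages of i and j), then sgn(C') = (−1)^{dk} · sgn(C). In particular, if both d and k are odd then sgn(C') = −sgn(C). -/
import Mathlib


open scoped Classical

namespace AT

/-- Lexicographic strict order on cells of `[k]^d`. -/
def cellLt {d k : ℕ} (a b : Fin d → Fin k) : Prop :=
  ∃ i : Fin d, (∀ j : Fin d, j < i → a j = b j) ∧ a i < b i

/-- Number of inversions of the values of `C` (blanks coded by `0`) in the slice of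
direction `ℓ` with coordinate `j`, cells compared in lexicographic order. -/
noncomputable def sliceInv {d k : ℕ} (C : (Fin d → Fin k) → ℕ) (ℓ : Fin d) (j : Fin k) : ℕ :=
  Set.ncard {p : (Fin d → Fin k) × (Fin d → Fin k) |
    p.1 ℓ = j ∧ p.2 ℓ = j ∧ cellLt p.1 p.2 ∧ C p.2 ≠ 0 ∧ C p.2 < C p.1}

/-- Directional sign: product over the slices in direction `ℓ` of the signs of the
slice permutations (computed as `(-1)^inversions`). -/
noncomputable def dirSgn {d k : ℕ} (C : (Fin d → Fin k) → ℕ) (ℓ : Fin d) : ℤ :=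
  ∏ j : Fin k, (-1 : ℤ) ^ sliceInv C ℓ j

/-- Full sign of a (partial) Latin hypercube. -/
noncomputable def fullSgn {d k : ℕ} (C : (Fin d → Fin k) → ℕ) : ℤ :=
  ∏ ℓ : Fin d, dirSgn C ℓ

/-- `C` is a `d`-dimensional Latin hypercube of length `k` with values in `[n]`:
every value of `[n]` occurs exactly once in every slice. -/
def IsLatin (d k n : ℕ) (C : (Fin d → Fin k) → ℕ) : Prop :=
  (∀ a, 1 ≤ C a ∧ C a ≤ n) ∧
  ∀ (ℓ : Fin d) (j : Fin k) (v : ℕ), 1 ≤ v → v ≤ n →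
    ∃! a : Fin d → Fin k, a ℓ = j ∧ C a = v

end AT

namespace AT

/-- `T` is a magic set with `n` cells in every slice (hence of cardinality `n·k`). -/
def IsMagic (d k n : ℕ) (T : Finset (Fin d → Fin k)) : Prop :=
  ∀ (ℓ : Fin d) (j : Fin k), (T.filter fun a => a ℓ = j).card = n

/-- `C` is a partial Latin hypercube of type `T` and cardinality `n·k`: it is supported
exactly on `T`, takes values in `{0,…,n}`, and on every slice its nonzero values form
a permutation of `[n]`. -/
def IsPartialLatin (d k n : ℕ) (T : Finset (Fin d → Fin k)) (C : (Fin d → Fin k) → ℕ) : Prop :=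
  (∀ a, a ∈ T ↔ C a ≠ 0) ∧ (∀ a, C a ≤ n) ∧
  ∀ (ℓ : Fin d) (j : Fin k) (v : ℕ), 1 ≤ v → v ≤ n →
    ∃! a : Fin d → Fin k, a ℓ = j ∧ C a = v

end AT


namespace AT

lemma cellLt_asymm {d k : ℕ} {x y : Fin d → Fin k} (h : cellLt x y) : ¬ cellLt y x := by
  obtain ⟨i, hia, hib⟩ := h
  rintro ⟨i', ha', hb'⟩
  rcases lt_trichotomy i i' with hlt | rfl | hlt
  · have e := ha' i hlt
    rw [e] at hib
    exact lt_irrefl _ hib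
  · exact lt_asymm hib hb'
  · have e := hia i' hlt
    rw [e] at hb'
    exact lt_irrefl _ hb'

lemma cellLt_trichotomy {d k : ℕ} {x y : Fin d → Fin k} (h : x ≠ y) :
    cellLt x y ∨ cellLt y x := by
  have hne : (Finset.univ.filter fun i => x i ≠ y i).Nonempty := by
    rw [Finset.filter_nonempty_iff]
    obtain ⟨i, hi⟩ := Function.ne_iff.mp h
    exact ⟨i, Finset.mem_univ i, hi⟩
  set s := Finset.univ.filter fun i => x i ≠ y i with hs
  have hi0mem := Finset.min'_mem s hne
  set i0 := s.min' hne with hi0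
  have hi0ne : x i0 ≠ y i0 := by
    rw [hs] at hi0mem
    simpa using hi0mem
  have hmin : ∀ j, j < i0 → x j = y j := by
    intro j hj
    by_contra hne'
    have hjs : j ∈ s := by simp [hs, hne']
    exact absurd (Finset.min'_le s j hjs) (not_le.mpr hj)
  rcases lt_or_gt_of_ne hi0ne with h' | h'
  · exact Or.inl ⟨i0, hmin, h'⟩
  · exact Or.inr ⟨i0, fun j hj => (hmin j hj).symm, h'⟩

noncomputable def op {d k : ℕ} (x y : Fin d → Fin k) :
    (Fin d → Fin k) × (Fin d → Fin k) :=
  if cellLt x y then (x, y) else (y, x)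

lemma op_left {d k : ℕ} {x y : Fin d → Fin k} (h : cellLt x y) : op x y = (x, y) :=
  if_pos h

lemma op_right {d k : ℕ} {x y : Fin d → Fin k} (h : cellLt y x) : op x y = (y, x) :=
  if_neg (cellLt_asymm h)

lemma op_cases {d k : ℕ} (x y : Fin d → Fin k) : op x y = (x, y) ∨ op x y = (y, x) := by
  unfold op; split_ifs <;> simp

lemma op_vals {d k : ℕ} (C : (Fin d → Fin k) → ℕ) (x y : Fin d → Fin k) :
    (C (op x y).1 = C x ∧ C (op x y).2 = C y) ∨
      (C (op x y).1 = C y ∧ C (op x y).2 = C x) := by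
  rcases op_cases x y with h | h <;> rw [h] <;> simp

/-- The "status changed" predicate for a pair of values `(u,v)` under the swap of `i,j`. -/
def Chg (i j u v : ℕ) : Prop :=
  ¬ (((if v = i then j else if v = j then i else v) ≠ 0 ∧
      (if v = i then j else if v = j then i else v) <
        (if u = i then j else if u = j then i else u)) ↔ (v ≠ 0 ∧ v < u))

lemma chg_cases {i j : ℕ} (u v : ℕ) (hi1 : 1 ≤ i) (hij : i < j) (h : Chg i j u v) :
    (u = i ∧ v = j) ∨ (u = j ∧ v = i) ∨ (u = i ∧ i < v ∧ v < j) ∨ (u = j ∧ i < v ∧ v < j)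
      ∨ (v = i ∧ i < u ∧ u < j) ∨ (v = j ∧ i < u ∧ u < j) := by
  unfold Chg at h
  split_ifs at h <;> omega

lemma chg_intro {i j : ℕ} (u v : ℕ) (hi1 : 1 ≤ i) (hij : i < j)
    (h : (u = i ∧ v = j) ∨ (u = j ∧ v = i) ∨ (u = i ∧ i < v ∧ v < j) ∨ (u = j ∧ i < v ∧ v < j)
      ∨ (v = i ∧ i < u ∧ u < j) ∨ (v = j ∧ i < u ∧ u < j)) :
    Chg i j u v := by
  unfold Chg
  split_ifs <;> omega

end AT

namespace AT

set_option maxHeartbeats 1000000 in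
lemma slice_odd {d k : ℕ} (n : ℕ) (C : (Fin d → Fin k) → ℕ)
    (hC : ∀ (ℓ : Fin d) (j : Fin k) (v : ℕ), 1 ≤ v → v ≤ n →
      ∃! a : Fin d → Fin k, a ℓ = j ∧ C a = v)
    (i j : ℕ) (hi1 : 1 ≤ i) (hij : i < j) (hjn : j ≤ n)
    (ℓ : Fin d) (j0 : Fin k) :
    Odd (sliceInv (fun a => if C a = i then j else if C a = j then i else C a) ℓ j0
       + sliceInv C ℓ j0) := by
  classical
  set C' : (Fin d → Fin k) → ℕ :=
    fun a => if C a = i then j else if C a = j then i else C a with hC'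
  obtain ⟨a, ⟨haℓ, hai⟩, ha⟩ := hC ℓ j0 i hi1 (le_of_lt (lt_of_lt_of_le hij hjn))
  obtain ⟨b, ⟨hbℓ, hbj⟩, hb⟩ := hC ℓ j0 j (le_trans hi1 hij.le) hjn
  have hab : a ≠ b := by
    intro h
    rw [h, hbj] at hai
    omega
  -- the cell carrying value v
  set c : ℕ → (Fin d → Fin k) :=
    fun v => if h : ∃ x, x ℓ = j0 ∧ C x = v then h.choose else a with hcdef
  have hc : ∀ v, 1 ≤ v → v ≤ n → (c v) ℓ = j0 ∧ C (c v) = v := by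
    intro v h1 h2
    obtain ⟨x, hx, -⟩ := hC ℓ j0 v h1 h2
    have hex : ∃ x, x ℓ = j0 ∧ C x = v := ⟨x, hx⟩
    simp only [hcdef, dif_pos hex]
    exact hex.choose_spec
  have hcu : ∀ v, 1 ≤ v → v ≤ n → ∀ y, y ℓ = j0 ∧ C y = v → y = c v := by
    intro v h1 h2 y hy
    obtain ⟨x, hx, hu⟩ := hC ℓ j0 v h1 h2
    rw [hu y hy, ← hu (c v) (hc v h1 h2)]
  have hca : ∀ v, i < v → v < j → a ≠ c v := by
    intro v h1 h2 h
    have := (hc v (by omega) (by omega)).2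
    rw [← h, hai] at this
    omega
  have hcb : ∀ v, i < v → v < j → b ≠ c v := by
    intro v h1 h2 h
    have := (hc v (by omega) (by omega)).2
    rw [← h, hbj] at this
    omega
  -- inversion finsets
  set A : Finset ((Fin d → Fin k) × (Fin d → Fin k)) :=
    Finset.univ.filter (fun p => p.1 ℓ = j0 ∧ p.2 ℓ = j0 ∧ cellLt p.1 p.2 ∧
      C p.2 ≠ 0 ∧ C p.2 < C p.1) with hA
  set A' : Finset ((Fin d → Fin k) × (Fin d → Fin k)) :=
    Finset.univ.filter (fun p => p.1 ℓ = j0 ∧ p.2 ℓ = j0 ∧ cellLt p.1 p.2 ∧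
      C' p.2 ≠ 0 ∧ C' p.2 < C' p.1) with hA'
  have hAcard : sliceInv C ℓ j0 = A.card := by
    rw [sliceInv, ← Set.ncard_coe_finset]
    congr 1
    ext p
    simp [hA]
  have hA'card : sliceInv C' ℓ j0 = A'.card := by
    rw [sliceInv, ← Set.ncard_coe_finset]
    congr 1
    ext p
    simp [hA']
  set D : Finset ((Fin d → Fin k) × (Fin d → Fin k)) := (A' \ A) ∪ (A \ A') with hD
  have hDmem : ∀ p : (Fin d → Fin k) × (Fin d → Fin k), p ∈ D ↔
      (p.1 ℓ = j0 ∧ p.2 ℓ = j0 ∧ cellLt p.1 p.2) ∧ Chg i j (C p.1) (C p.2) := by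
    intro p
    simp only [hD, Finset.mem_union, Finset.mem_sdiff, hA, hA', Finset.mem_filter,
      Finset.mem_univ, true_and, hC', Chg]
    tauto
  set S1 : Finset ((Fin d → Fin k) × (Fin d → Fin k)) :=
    (Finset.Ioo i j).image (fun v => op a (c v)) with hS1
  set S2 : Finset ((Fin d → Fin k) × (Fin d → Fin k)) :=
    (Finset.Ioo i j).image (fun v => op b (c v)) with hS2
  have hDeq : D = insert (op a b) (S1 ∪ S2) := by
    ext p
    rw [hDmem p]
    constructor
    · rintro ⟨⟨h1, h2, hlt⟩, hchg⟩
      rcases chg_cases _ _ hi1 hij hchg with ⟨hu, hv⟩ | ⟨hu, hv⟩ | ⟨hu, hv1, hv2⟩ |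
        ⟨hu, hv1, hv2⟩ | ⟨hv, hu1, hu2⟩ | ⟨hv, hu1, hu2⟩
      · have e1 : p.1 = a := ha _ ⟨h1, hu⟩
        have e2 : p.2 = b := hb _ ⟨h2, hv⟩
        have hlt' : cellLt a p.2 := by rw [← e1]; exact hlt
        rw [e2] at hlt'
        have : op a b = p := by
          rw [op_left hlt']
          exact (Prod.ext e1 e2).symm
        rw [← this]
        exact Finset.mem_insert_self _ _
      · have e1 : p.1 = b := hb _ ⟨h1, hu⟩
        have e2 : p.2 = a := ha _ ⟨h2, hv⟩
        have hlt' : cellLt b p.2 := by rw [← e1]; exact hlt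
        rw [e2] at hlt'
        have : op a b = p := by
          rw [op_right hlt']
          exact (Prod.ext e1 e2).symm
        rw [← this]
        exact Finset.mem_insert_self _ _
      · have e1 : p.1 = a := ha _ ⟨h1, hu⟩
        have e2 : p.2 = c (C p.2) := hcu (C p.2) (by omega) (by omega) _ ⟨h2, rfl⟩
        refine Finset.mem_insert_of_mem (Finset.mem_union_left _ (Finset.mem_image.mpr
          ⟨C p.2, Finset.mem_Ioo.mpr ⟨hv1, hv2⟩, ?_⟩))
        have hlt' : cellLt p.1 (c (C p.2)) := by rw [← e2]; exact hlt
        rw [e1] at hlt'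
        show op _ (c (C p.2)) = p
        rw [op_left hlt']
        exact (Prod.ext e1 e2).symm
      · have e1 : p.1 = b := hb _ ⟨h1, hu⟩
        have e2 : p.2 = c (C p.2) := hcu (C p.2) (by omega) (by omega) _ ⟨h2, rfl⟩
        refine Finset.mem_insert_of_mem (Finset.mem_union_right _ (Finset.mem_image.mpr
          ⟨C p.2, Finset.mem_Ioo.mpr ⟨hv1, hv2⟩, ?_⟩))
        have hlt' : cellLt p.1 (c (C p.2)) := by rw [← e2]; exact hlt
        rw [e1] at hlt'
        show op _ (c (C p.2)) = p
        rw [op_left hlt']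
        exact (Prod.ext e1 e2).symm
      · have e2 : p.2 = a := ha _ ⟨h2, hv⟩
        have e1 : p.1 = c (C p.1) := hcu (C p.1) (by omega) (by omega) _ ⟨h1, rfl⟩
        refine Finset.mem_insert_of_mem (Finset.mem_union_left _ (Finset.mem_image.mpr
          ⟨C p.1, Finset.mem_Ioo.mpr ⟨hu1, hu2⟩, ?_⟩))
        have hlt' : cellLt (c (C p.1)) p.2 := by rw [← e1]; exact hlt
        rw [e2] at hlt'
        show op _ (c (C p.1)) = p
        rw [op_right hlt']
        exact (Prod.ext e1 e2).symm
      · have e2 : p.2 = b := hb _ ⟨h2, hv⟩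
        have e1 : p.1 = c (C p.1) := hcu (C p.1) (by omega) (by omega) _ ⟨h1, rfl⟩
        refine Finset.mem_insert_of_mem (Finset.mem_union_right _ (Finset.mem_image.mpr
          ⟨C p.1, Finset.mem_Ioo.mpr ⟨hu1, hu2⟩, ?_⟩))
        have hlt' : cellLt (c (C p.1)) p.2 := by rw [← e1]; exact hlt
        rw [e2] at hlt'
        show op _ (c (C p.1)) = p
        rw [op_right hlt']
        exact (Prod.ext e1 e2).symm
    · intro hp
      rcases Finset.mem_insert.mp hp with he | hp'
      · rcases cellLt_trichotomy hab with hlt | hlt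
        · rw [he, op_left hlt]
          exact ⟨⟨haℓ, hbℓ, hlt⟩, chg_intro _ _ hi1 hij (Or.inl ⟨hai, hbj⟩)⟩
        · rw [he, op_right hlt]
          exact ⟨⟨hbℓ, haℓ, hlt⟩, chg_intro _ _ hi1 hij (Or.inr (Or.inl ⟨hbj, hai⟩))⟩
      · rcases Finset.mem_union.mp hp' with hmem | hmem
        · obtain ⟨v, hv, he⟩ := Finset.mem_image.mp hmem
          rw [Finset.mem_Ioo] at hv
          have hcv := hc v (by omega) (by omega)
          rcases cellLt_trichotomy (hca v hv.1 hv.2) with hlt | hlt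
          · rw [← he, op_left hlt]
            refine ⟨⟨haℓ, hcv.1, hlt⟩, chg_intro _ _ hi1 hij ?_⟩
            rw [hai, hcv.2]
            exact Or.inr (Or.inr (Or.inl ⟨rfl, hv.1, hv.2⟩))
          · rw [← he, op_right hlt]
            refine ⟨⟨hcv.1, haℓ, hlt⟩, chg_intro _ _ hi1 hij ?_⟩
            rw [hai, hcv.2]
            exact Or.inr (Or.inr (Or.inr (Or.inr (Or.inl ⟨rfl, hv.1, hv.2⟩))))
        · obtain ⟨v, hv, he⟩ := Finset.mem_image.mp hmem
          rw [Finset.mem_Ioo] at hv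
          have hcv := hc v (by omega) (by omega)
          rcases cellLt_trichotomy (hcb v hv.1 hv.2) with hlt | hlt
          · rw [← he, op_left hlt]
            refine ⟨⟨hbℓ, hcv.1, hlt⟩, chg_intro _ _ hi1 hij ?_⟩
            rw [hbj, hcv.2]
            exact Or.inr (Or.inr (Or.inr (Or.inl ⟨rfl, hv.1, hv.2⟩)))
          · rw [← he, op_right hlt]
            refine ⟨⟨hcv.1, hbℓ, hlt⟩, chg_intro _ _ hi1 hij ?_⟩
            rw [hbj, hcv.2]
            exact Or.inr (Or.inr (Or.inr (Or.inr (Or.inr ⟨rfl, hv.1, hv.2⟩))))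
  -- counting
  have hS1card : S1.card = (Finset.Ioo i j).card := by
    rw [hS1]
    apply Finset.card_image_of_injOn
    intro v hv v' hv' he
    rw [Finset.mem_coe, Finset.mem_Ioo] at hv hv'
    have hcv := hc v (by omega) (by omega)
    have hcv' := hc v' (by omega) (by omega)
    have h1 := op_vals C a (c v)
    have h2 := op_vals C a (c v')
    have heb : op a (c v) = op a (c v') := he
    rw [heb] at h1
    rw [hai, hcv.2] at h1
    rw [hai, hcv'.2] at h2
    rcases h1 with ⟨e1, e2⟩ | ⟨e1, e2⟩ <;> rcases h2 with ⟨f1, f2⟩ | ⟨f1, f2⟩ <;> omega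
  have hS2card : S2.card = (Finset.Ioo i j).card := by
    rw [hS2]
    apply Finset.card_image_of_injOn
    intro v hv v' hv' he
    rw [Finset.mem_coe, Finset.mem_Ioo] at hv hv'
    have hcv := hc v (by omega) (by omega)
    have hcv' := hc v' (by omega) (by omega)
    have h1 := op_vals C b (c v)
    have h2 := op_vals C b (c v')
    have heb : op b (c v) = op b (c v') := he
    rw [heb] at h1
    rw [hbj, hcv.2] at h1
    rw [hbj, hcv'.2] at h2
    rcases h1 with ⟨e1, e2⟩ | ⟨e1, e2⟩ <;> rcases h2 with ⟨f1, f2⟩ | ⟨f1, f2⟩ <;> omega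
  have hdisj : Disjoint S1 S2 := by
    rw [Finset.disjoint_left]
    intro p hp1 hp2
    obtain ⟨v, hv, he⟩ := Finset.mem_image.mp hp1
    obtain ⟨v', hv', he'⟩ := Finset.mem_image.mp hp2
    rw [Finset.mem_Ioo] at hv hv'
    have hcv := hc v (by omega) (by omega)
    have hcv' := hc v' (by omega) (by omega)
    have h1 := op_vals C a (c v)
    have h2 := op_vals C b (c v')
    have heb : op a (c v) = p := he
    have heb' : op b (c v') = p := he'
    rw [heb] at h1
    rw [heb'] at h2
    rw [hai, hcv.2] at h1
    rw [hbj, hcv'.2] at h2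
    rcases h1 with ⟨e1, e2⟩ | ⟨e1, e2⟩ <;> rcases h2 with ⟨f1, f2⟩ | ⟨f1, f2⟩ <;> omega
  have hopab : op a b ∉ S1 ∪ S2 := by
    intro hmem
    have h1 := op_vals C a b
    rw [hai, hbj] at h1
    rcases Finset.mem_union.mp hmem with h | h <;>
      obtain ⟨v, hv, he⟩ := Finset.mem_image.mp h <;>
      rw [Finset.mem_Ioo] at hv
    · have hcv := hc v (by omega) (by omega)
      have h2 := op_vals C a (c v)
      have heb : op a (c v) = op a b := he
      rw [heb] at h2
      rw [hai, hcv.2] at h2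
      rcases h1 with ⟨e1, e2⟩ | ⟨e1, e2⟩ <;> rcases h2 with ⟨f1, f2⟩ | ⟨f1, f2⟩ <;> omega
    · have hcv := hc v (by omega) (by omega)
      have h2 := op_vals C b (c v)
      have heb : op b (c v) = op a b := he
      rw [heb] at h2
      rw [hbj, hcv.2] at h2
      rcases h1 with ⟨e1, e2⟩ | ⟨e1, e2⟩ <;> rcases h2 with ⟨f1, f2⟩ | ⟨f1, f2⟩ <;> omega
  have hDcard : D.card = 2 * (Finset.Ioo i j).card + 1 := by
    rw [hDeq, Finset.card_insert_of_notMem hopab, Finset.card_union_of_disjoint hdisj,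
      hS1card, hS2card]
    ring
  have e1 : (A' \ A).card + (A' ∩ A).card = A'.card := Finset.card_sdiff_add_card_inter A' A
  have e2 : (A \ A').card + (A ∩ A').card = A.card := Finset.card_sdiff_add_card_inter A A'
  have e3 : D.card = (A' \ A).card + (A \ A').card := by
    rw [hD]
    exact Finset.card_union_of_disjoint disjoint_sdiff_sdiff
  have e4 : (A' ∩ A).card = (A ∩ A').card := by rw [Finset.inter_comm]
  rw [hA'card, hAcard, Nat.odd_iff]
  omega

end AT

/-- Exchanging two distinct values `i ≠ j ∈ [n]` in a partial Latin
hypercube of type a magic set `T` (of cardinality `nk`) multiplies the full sign by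
`(−1)^(dk)`; in particular, if both `d` and `k` are odd the sign is reversed. -/
theorem partial_latin_swap_sign (d k n : ℕ) (hd3 : 3 ≤ d) (hd : Odd d) (hn : 1 < n)
    (T : Finset (Fin d → Fin k)) (hT : AT.IsMagic d k n T)
    (C : (Fin d → Fin k) → ℕ) (hC : AT.IsPartialLatin d k n T C)
    (i j : ℕ) (hi1 : 1 ≤ i) (hin : i ≤ n) (hj1 : 1 ≤ j) (hjn : j ≤ n) (hij : i ≠ j) :
    AT.fullSgn (fun a => if C a = i then j else if C a = j then i else C a)
        = (-1 : ℤ) ^ (d * k) * AT.fullSgn C ∧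
      (Odd k →
        AT.fullSgn (fun a => if C a = i then j else if C a = j then i else C a)
          = -AT.fullSgn C) := by
  classical
  set C' : (Fin d → Fin k) → ℕ :=
    fun a => if C a = i then j else if C a = j then i else C a with hC'
  have hkey : ∀ (ℓ : Fin d) (j0 : Fin k),
      Odd (AT.sliceInv C' ℓ j0 + AT.sliceInv C ℓ j0) := by
    intro ℓ j0
    rcases lt_or_gt_of_ne hij with h | h
    · exact AT.slice_odd n C hC.2.2 i j hi1 h hjn ℓ j0
    · have hfe : C' = fun a => if C a = j then i else if C a = i then j else C a := by
        funext a
        show (if C a = i then j else if C a = j then i else C a) = _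
        split_ifs <;> omega
      rw [hfe]
      exact AT.slice_odd n C hC.2.2 j i hj1 h hin ℓ j0
  have hslice : ∀ (ℓ : Fin d) (j0 : Fin k),
      ((-1 : ℤ)) ^ AT.sliceInv C' ℓ j0 = -((-1 : ℤ) ^ AT.sliceInv C ℓ j0) := by
    intro ℓ j0
    have hsum : ((-1 : ℤ)) ^ (AT.sliceInv C' ℓ j0 + AT.sliceInv C ℓ j0) = -1 :=
      Odd.neg_one_pow (hkey ℓ j0)
    rw [pow_add] at hsum
    have hsq : ((-1 : ℤ)) ^ AT.sliceInv C ℓ j0 * (-1 : ℤ) ^ AT.sliceInv C ℓ j0 = 1 := by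
      rw [← pow_add]
      exact Even.neg_one_pow ⟨_, rfl⟩
    calc ((-1 : ℤ)) ^ AT.sliceInv C' ℓ j0
        = ((-1 : ℤ)) ^ AT.sliceInv C' ℓ j0 *
            ((-1 : ℤ) ^ AT.sliceInv C ℓ j0 * (-1 : ℤ) ^ AT.sliceInv C ℓ j0) := by
          rw [hsq, mul_one]
      _ = ((-1 : ℤ)) ^ AT.sliceInv C' ℓ j0 * (-1 : ℤ) ^ AT.sliceInv C ℓ j0 *
            (-1 : ℤ) ^ AT.sliceInv C ℓ j0 := by ring
      _ = -1 * (-1 : ℤ) ^ AT.sliceInv C ℓ j0 := by rw [hsum]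
      _ = -((-1 : ℤ) ^ AT.sliceInv C ℓ j0) := by ring
  have hdir : ∀ ℓ : Fin d, AT.dirSgn C' ℓ = (-1 : ℤ) ^ k * AT.dirSgn C ℓ := by
    intro ℓ
    unfold AT.dirSgn
    calc (∏ j0 : Fin k, (-1 : ℤ) ^ AT.sliceInv C' ℓ j0)
        = ∏ j0 : Fin k, (-1 : ℤ) * (-1 : ℤ) ^ AT.sliceInv C ℓ j0 :=
          Finset.prod_congr rfl (fun j0 _ => by rw [hslice ℓ j0]; ring)
      _ = (∏ _j0 : Fin k, (-1 : ℤ)) * ∏ j0 : Fin k, (-1 : ℤ) ^ AT.sliceInv C ℓ j0 :=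
          Finset.prod_mul_distrib
      _ = (-1 : ℤ) ^ k * ∏ j0 : Fin k, (-1 : ℤ) ^ AT.sliceInv C ℓ j0 := by
          rw [Finset.prod_const, Finset.card_univ, Fintype.card_fin]
  have hfull : AT.fullSgn C' = (-1 : ℤ) ^ (d * k) * AT.fullSgn C := by
    unfold AT.fullSgn
    calc (∏ ℓ : Fin d, AT.dirSgn C' ℓ)
        = ∏ ℓ : Fin d, (-1 : ℤ) ^ k * AT.dirSgn C ℓ :=
          Finset.prod_congr rfl (fun ℓ _ => hdir ℓ)
      _ = (∏ _ℓ : Fin d, (-1 : ℤ) ^ k) * ∏ ℓ : Fin d, AT.dirSgn C ℓ :=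
          Finset.prod_mul_distrib
      _ = (-1 : ℤ) ^ (d * k) * ∏ ℓ : Fin d, AT.dirSgn C ℓ := by
          rw [Finset.prod_const, Finset.card_univ, Fintype.card_fin, ← pow_mul,
            Nat.mul_comm]
  refine ⟨hfull, fun hk => ?_⟩
  rw [hfull, Odd.neg_one_pow (hd.mul hk), neg_one_mul]
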